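/- arXiv:2601.22171 — 5 statements merged into one kernel-verified Lean document; each statement's English description precedes it below -/
import Mathlib

section
/- Let A be a bounded operator on a Hilbert space H and let B be a bounded self-adjoint operator on H. If A·B^q is a compact operator for some real q > 0, then A·B^q is compact for all real q > 0. (Here B^q is defined via the continuous functional calculus on the positive self-adjoint operator B, which may be assumed positive.) -/
set_option maxHeartbeats 1000000

open scoped NNReal

lemma rpow_eq_cfc_real {H : Type*} [NormedAddCommGroup H] [InnerProductSpace ℂ H]
    [CompleteSpace H] (B : H →L[ℂ] H) (hBpos : 0 ≤ B) (q : ℝ) :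
    B ^ q = cfc (fun x : ℝ => x ^ q) B := by
  rw [CFC.rpow_def, cfc_nnreal_eq_real _ _ hBpos]
  apply cfc_congr
  intro x hx
  have hx0 : 0 ≤ x := spectrum_nonneg_of_nonneg hBpos hx
  simp [NNReal.coe_rpow, Real.coe_toNNReal _ hx0]

/-- If `A` is a bounded operator and `B` a positive (self-adjoint)
bounded operator on a Hilbert space `H`, and `A * B ^ q` is compact for some real
`q > 0` (powers via the continuous functional calculus), then `A * B ^ q` is compact
for every real `q > 0`. -/
theorem compact_weighted_power_all_of_exists
    {H : Type*} [NormedAddCommGroup H] [InnerProductSpace ℂ H] [CompleteSpace H]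
    (A B : H →L[ℂ] H) (hB : IsSelfAdjoint B) (hBpos : 0 ≤ B)
    (h : ∃ q : ℝ, 0 < q ∧ IsCompactOperator ((A * B ^ q : H →L[ℂ] H) : H → H)) :
    ∀ q : ℝ, 0 < q → IsCompactOperator ((A * B ^ q : H →L[ℂ] H) : H → H) := by
  obtain ⟨p, hp, hcomp⟩ := h
  intro q hq
  -- key approximation: for every δ > 0, there is a compact operator within 2‖A‖δ^q
  have key : ∀ δ : ℝ, 0 < δ → ∃ T : H →L[ℂ] H, IsCompactOperator (T : H → H) ∧
      ‖(A * B ^ q : H →L[ℂ] H) - T‖ ≤ ‖A‖ * (2 * δ ^ q) := by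
    intro δ hδ
    set hf : ℝ → ℝ := fun x => (max x δ) ^ (q - p) with hfdef
    have hhc : Continuous hf := by
      apply Continuous.rpow_const (by fun_prop)
      intro x
      exact Or.inl (by positivity)
    have hcq : Continuous fun x : ℝ => x ^ q :=
      continuous_id.rpow_const fun x => Or.inr hq.le
    have hcp : Continuous fun x : ℝ => x ^ p :=
      continuous_id.rpow_const fun x => Or.inr hp.le
    set g : ℝ → ℝ := fun x => x ^ q - x ^ p * hf x with hgdef
    have hgc : Continuous g := by fun_prop
    refine ⟨(A * B ^ p) * cfc hf B, ?_, ?_⟩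
    · exact hcomp.comp_clm (cfc hf B)
    · have hsplit : (A * B ^ q : H →L[ℂ] H) - (A * B ^ p) * cfc hf B = A * cfc g B := by
        have h1 : B ^ q = cfc (fun x : ℝ => x ^ q) B := rpow_eq_cfc_real B hBpos q
        have h2 : B ^ p = cfc (fun x : ℝ => x ^ p) B := rpow_eq_cfc_real B hBpos p
        have h3 : cfc (fun x : ℝ => x ^ q) B
            = cfc (fun x : ℝ => x ^ p) B * cfc hf B + cfc g B := by
          have h4 : cfc (fun x : ℝ => x ^ p * hf x + g x) B
              = cfc (fun x : ℝ => x ^ p) B * cfc hf B + cfc g B := by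
            rw [cfc_add (a := B) (fun x : ℝ => x ^ p * hf x) g
              ((hcp.mul hhc).continuousOn) hgc.continuousOn,
              cfc_mul _ _ B hcp.continuousOn hhc.continuousOn]
          rw [← h4]
          apply cfc_congr
          intro x _
          simp [hgdef]
        rw [h1, h2, h3]
        noncomm_ring
      rw [hsplit]
      calc ‖A * cfc g B‖ ≤ ‖A‖ * ‖cfc g B‖ := norm_mul_le A _
        _ ≤ ‖A‖ * (2 * δ ^ q) := by
            apply mul_le_mul_of_nonneg_left _ (norm_nonneg A)
            apply norm_cfc_le (by positivity)
            intro x hx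
            have hx0 : 0 ≤ x := spectrum_nonneg_of_nonneg hBpos hx
            rcases le_or_gt δ x with hxd | hxd
            · have hxpos : 0 < x := lt_of_lt_of_le hδ hxd
              have : g x = 0 := by
                simp only [hgdef, hfdef, max_eq_left hxd]
                rw [← Real.rpow_add hxpos]
                ring_nf
              rw [this, norm_zero]
              positivity
            · have h1 : x ^ q ≤ δ ^ q := Real.rpow_le_rpow hx0 hxd.le hq.le
              have h2 : x ^ p * hf x ≤ δ ^ q := by
                have : hf x = δ ^ (q - p) := by
                  simp [hfdef, max_eq_right hxd.le]
                rw [this]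
                calc x ^ p * δ ^ (q - p) ≤ δ ^ p * δ ^ (q - p) :=
                      mul_le_mul_of_nonneg_right (Real.rpow_le_rpow hx0 hxd.le hp.le)
                        (Real.rpow_nonneg hδ.le _)
                  _ = δ ^ q := by rw [← Real.rpow_add hδ]; ring_nf
              have h1' : 0 ≤ x ^ q := Real.rpow_nonneg hx0 q
              have h2' : 0 ≤ x ^ p * hf x := by
                apply mul_nonneg (Real.rpow_nonneg hx0 p)
                exact Real.rpow_nonneg (by positivity) _
              rw [Real.norm_eq_abs, abs_sub_le_iff]
              constructor <;> nlinarith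
  -- conclude via closedness of compact operators
  have hclosed : IsClosed {T : H →L[ℂ] H | IsCompactOperator (T : H → H)} :=
    isClosed_setOf_isCompactOperator
  have : (A * B ^ q : H →L[ℂ] H) ∈ closure {T : H →L[ℂ] H | IsCompactOperator (T : H → H)} := by
    rw [Metric.mem_closure_iff]
    intro ε hε
    set δ : ℝ := (ε / (2 * ‖A‖ + 2)) ^ q⁻¹ with hδdef
    have hδpos : 0 < δ := Real.rpow_pos_of_pos (by positivity) _
    obtain ⟨T, hT, hTnorm⟩ := key δ hδpos
    refine ⟨T, hT, ?_⟩
    have hδq : δ ^ q = ε / (2 * ‖A‖ + 2) := Real.rpow_inv_rpow (by positivity) hq.ne'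
    rw [dist_eq_norm]
    calc ‖(A * B ^ q : H →L[ℂ] H) - T‖ ≤ ‖A‖ * (2 * δ ^ q) := hTnorm
      _ < ε := by
          rw [hδq, div_eq_inv_mul]
          have hA : 0 ≤ ‖A‖ := norm_nonneg A
          have ht : 0 < (2 * ‖A‖ + 2)⁻¹ := by positivity
          have hc : (2 * ‖A‖ + 2) * (2 * ‖A‖ + 2)⁻¹ = 1 :=
            mul_inv_cancel₀ (by positivity)
          nlinarith [mul_pos ht hε]
  rwa [hclosed.closure_eq] at this
end

section
/- Let l range over negative half-integers (l ∈ ½ℤ, l ≤ -½), with ε = 0 if l ∈ ℤ and ε = ½ if 2l is odd, and let m range over integers with m < l - ε, writing m' = m + ε. Then the series ∑_l (-l - ½) ∑_m 1/(-½ l(l+1) + m'(m'+1) + 9/8)^{q/2} converges for q > 3. -/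
open Real

/-- Lower bounds on the denominator. -/
private lemma denom_bounds (n : ℕ+) (m : ℤ)
    (hm : (m : ℝ) < -(n : ℝ) / 2 - (if Even (n : ℕ) then (0 : ℝ) else 1 / 2)) :
    (n : ℝ) ^ 2 / 8 + 1 ≤
        -(1 / 2) * (-(n : ℝ) / 2) * (-(n : ℝ) / 2 + 1) +
          ((m : ℝ) + (if Even (n : ℕ) then (0 : ℝ) else 1 / 2)) *
            (((m : ℝ) + (if Even (n : ℕ) then (0 : ℝ) else 1 / 2)) + 1) + 9 / 8 ∧
      (((m : ℝ) + 1) ^ 2 + 1) / 2 ≤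
        -(1 / 2) * (-(n : ℝ) / 2) * (-(n : ℝ) / 2 + 1) +
          ((m : ℝ) + (if Even (n : ℕ) then (0 : ℝ) else 1 / 2)) *
            (((m : ℝ) + (if Even (n : ℕ) then (0 : ℝ) else 1 / 2)) + 1) + 9 / 8 := by
  set ε : ℝ := if Even (n : ℕ) then (0 : ℝ) else 1 / 2 with hε
  have hN1 : (1 : ℝ) ≤ (n : ℝ) := by exact_mod_cast n.one_le
  -- Key fact : (m + ε + 1/2)^2 ≥ ((n+1)/2)^2 and m + 1 ≤ 0
  have key : ((n : ℝ) + 1) ^ 2 / 4 ≤ ((m : ℝ) + ε + 1 / 2) ^ 2 ∧ (m : ℝ) + 1 ≤ 0 := by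
    rcases Nat.even_or_odd (n : ℕ) with he | ho
    · obtain ⟨k, hk⟩ := id he
      have hne : (n : ℕ) ≠ 0 := n.ne_zero
      have hk1 : 1 ≤ k := by omega
      have hNk : (n : ℝ) = 2 * (k : ℝ) := by
        have h' : (n : ℕ) = 2 * k := by omega
        exact_mod_cast h'
      have hεval : ε = 0 := by rw [hε, if_pos he]
      rw [hεval] at hm ⊢
      have hmk : (m : ℝ) < -(k : ℝ) := by rw [hNk] at hm; linarith
      have hmk' : m ≤ -(k : ℤ) - 1 := by
        have : m < -(k : ℤ) := by exact_mod_cast hmk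
        omega
      have hmk'' : (m : ℝ) ≤ -(k : ℝ) - 1 := by exact_mod_cast hmk'
      have hk1' : (1 : ℝ) ≤ (k : ℝ) := by exact_mod_cast hk1
      constructor
      · nlinarith [sq_nonneg ((m : ℝ) + (k : ℝ) + 1)]
      · linarith
    · obtain ⟨k, hk⟩ := ho
      have hNk : (n : ℝ) = 2 * (k : ℝ) + 1 := by
        exact_mod_cast congrArg (Nat.cast : ℕ → ℝ) hk
      have hno : ¬ Even (n : ℕ) := by
        rw [hk]; simp [Nat.even_iff, Nat.add_mul_mod_self_left]
      have hεval : ε = 1 / 2 := by rw [hε, if_neg hno]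
      rw [hεval] at hm ⊢
      have hmk : (m : ℝ) < -((k : ℝ) + 1) := by rw [hNk] at hm; linarith
      have hmk' : m ≤ -(k : ℤ) - 2 := by
        have : m < -((k : ℤ) + 1) := by exact_mod_cast hmk
        omega
      have hmk'' : (m : ℝ) ≤ -(k : ℝ) - 2 := by exact_mod_cast hmk'
      have hk0 : (0 : ℝ) ≤ (k : ℝ) := Nat.cast_nonneg k
      constructor
      · nlinarith [sq_nonneg ((m : ℝ) + (k : ℝ) + 2)]
      · linarith
  obtain ⟨hA1, hm1⟩ := key
  have hε0 : 0 ≤ ε := by rw [hε]; split <;> norm_num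
  have hε1 : ε ≤ 1 / 2 := by rw [hε]; split <;> norm_num
  -- (m + ε + 1/2)^2 ≥ (m+1)^2
  have hA2 : ((m : ℝ) + 1) ^ 2 ≤ ((m : ℝ) + ε + 1 / 2) ^ 2 := by nlinarith
  constructor
  · nlinarith
  · nlinarith

private lemma aux_summable_nat (r : ℝ) (hr : 1 < r) :
    Summable (fun n : ℕ => ((n : ℝ) + 1) ^ (-r)) := by
  have h1 : Summable (fun n : ℕ => ((n : ℝ)) ^ (-r)) :=
    Real.summable_nat_rpow.mpr (by linarith)
  have h2 := (summable_nat_add_iff 1).mpr h1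
  simpa using h2

private lemma aux_summable_int (r : ℝ) (hr : 1 / 2 < r) :
    Summable (fun m : ℤ => (((m : ℝ) + 1) ^ 2 + 1) ^ (-r)) := by
  have hmaj : Summable (fun n : ℕ => (8 : ℝ) ^ r * ((n : ℝ) + 1) ^ (-(2 * r))) :=
    (aux_summable_nat (2 * r) (by linarith)).mul_left _
  have main : ∀ (x : ℝ) (n : ℕ), ((n : ℝ) + 1) ^ 2 ≤ 8 * ((x + 1) ^ 2 + 1) →
      ((x + 1) ^ 2 + 1) ^ (-r) ≤ (8 : ℝ) ^ r * ((n : ℝ) + 1) ^ (-(2 * r)) := by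
    intro x n h
    have hn1 : (0 : ℝ) < (n : ℝ) + 1 := by positivity
    have h8 : (0 : ℝ) < ((n : ℝ) + 1) ^ 2 / 8 := by positivity
    have hle : ((n : ℝ) + 1) ^ 2 / 8 ≤ (x + 1) ^ 2 + 1 := by linarith
    have := Real.rpow_le_rpow_of_nonpos h8 hle (by linarith : -r ≤ 0)
    calc ((x + 1) ^ 2 + 1) ^ (-r) ≤ (((n : ℝ) + 1) ^ 2 / 8) ^ (-r) := this
      _ = (8 : ℝ) ^ r * ((n : ℝ) + 1) ^ (-(2 * r)) := by
          rw [Real.div_rpow (by positivity) (by norm_num),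
            ← Real.rpow_natCast ((n : ℝ) + 1) 2, ← Real.rpow_mul hn1.le,
            Real.rpow_neg (by norm_num : (0:ℝ) ≤ 8), div_eq_mul_inv, inv_inv, mul_comm]
          congr 1
          congr 1
          push_cast; ring
  apply Summable.of_nat_of_neg
  · apply Summable.of_nonneg_of_le (fun n => by positivity) _ hmaj
    intro n
    exact main _ n (by push_cast; nlinarith [sq_nonneg ((n : ℝ))])
  · apply Summable.of_nonneg_of_le (fun n => by positivity) _ hmaj
    intro n
    exact main _ n (by push_cast; nlinarith [sq_nonneg ((n : ℝ) - 2)])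

/-- With `l` ranging over negative half-integers (parametrized by
`n : ℕ+` via `l = -n/2`), `ε = 0` if `l ∈ ℤ` and `ε = 1/2` if `2l` is odd, and `m`
ranging over integers with `m < l - ε` (writing `m' = m + ε`), the series
`∑_l (-l - 1/2) ∑_m (-(1/2) l(l+1) + m'(m'+1) + 9/8)^(-q/2)` converges for `q > 3`. -/
theorem negative_discrete_series_summable (q : ℝ) (hq : 3 < q) :
    Summable (fun p : Σ n : ℕ+, {m : ℤ //
        (m : ℝ) < -(n : ℝ) / 2 - (if Even (n : ℕ) then (0 : ℝ) else 1 / 2)} =>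
      let l : ℝ := -(p.1 : ℝ) / 2
      let ε : ℝ := if Even (p.1 : ℕ) then 0 else 1 / 2
      let m' : ℝ := (p.2 : ℤ) + ε
      (-l - 1 / 2) * (1 / (-(1 / 2) * l * (l + 1) + m' * (m' + 1) + 9 / 8) ^ (q / 2))) := by
  -- the majorant on ℕ+ × ℤ
  set C : ℝ := 8 ^ (q / 3) * 2 ^ (q / 6) with hC
  have hf : Summable (fun n : ℕ+ => ((n : ℕ) : ℝ) ^ (1 - 2 * q / 3)) := by
    have : Summable (fun n : ℕ => (n : ℝ) ^ (1 - 2 * q / 3)) :=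
      Real.summable_nat_rpow.mpr (by linarith)
    exact this.comp_injective PNat.coe_injective
  have hg : Summable (fun m : ℤ => (((m : ℝ) + 1) ^ 2 + 1) ^ (-(q / 6))) :=
    aux_summable_int (q / 6) (by linarith)
  have hG : Summable (fun x : ℕ+ × ℤ =>
      C * (((x.1 : ℕ) : ℝ) ^ (1 - 2 * q / 3) * (((x.2 : ℝ) + 1) ^ 2 + 1) ^ (-(q / 6)))) :=
    (hf.mul_of_nonneg hg (fun n => by positivity) (fun m => by positivity)).mul_left C
  have hemb : Function.Injective (fun p : Σ n : ℕ+, {m : ℤ //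
      (m : ℝ) < -(n : ℝ) / 2 - (if Even (n : ℕ) then (0 : ℝ) else 1 / 2)} =>
      ((p.1, (p.2 : ℤ)) : ℕ+ × ℤ)) := by
    rintro ⟨a, m1, hm1⟩ ⟨b, m2, hm2⟩ h
    simp only [Prod.mk.injEq] at h
    obtain ⟨rfl, h2⟩ := h
    subst h2
    rfl
  apply Summable.of_nonneg_of_le _ _ (hG.comp_injective hemb)
  · rintro ⟨n, m, hm⟩
    obtain ⟨hD1, hD2⟩ := denom_bounds n m hm
    have hN1 : (1 : ℝ) ≤ (n : ℝ) := by exact_mod_cast n.one_le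
    have hDpos : (0 : ℝ) < -(1 / 2) * (-(n : ℝ) / 2) * (-(n : ℝ) / 2 + 1) +
        ((m : ℝ) + (if Even (n : ℕ) then (0 : ℝ) else 1 / 2)) *
          (((m : ℝ) + (if Even (n : ℕ) then (0 : ℝ) else 1 / 2)) + 1) + 9 / 8 :=
      lt_of_lt_of_le (by positivity) hD1
    show (0 : ℝ) ≤ (-(-(n : ℝ) / 2) - 1 / 2) * _
    have h1 : (0 : ℝ) ≤ -(-(n : ℝ) / 2) - 1 / 2 := by linarith
    positivity
  · rintro ⟨n, m, hm⟩
    obtain ⟨hD1, hD2⟩ := denom_bounds n m hm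
    have hN1 : (1 : ℝ) ≤ (n : ℝ) := by exact_mod_cast n.one_le
    set ε : ℝ := if Even (n : ℕ) then (0 : ℝ) else 1 / 2 with hε
    set D : ℝ := -(1 / 2) * (-(n : ℝ) / 2) * (-(n : ℝ) / 2 + 1) +
        ((m : ℝ) + ε) * (((m : ℝ) + ε) + 1) + 9 / 8 with hD
    have hDpos : (0 : ℝ) < D := lt_of_lt_of_le (by positivity) hD1
    show (-(-(n : ℝ) / 2) - 1 / 2) * (1 / D ^ (q / 2)) ≤
      C * (((n : ℕ) : ℝ) ^ (1 - 2 * q / 3) * (((m : ℝ) + 1) ^ 2 + 1) ^ (-(q / 6)))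
    have hsplit : D ^ (q / 2) = D ^ (q / 3) * D ^ (q / 6) := by
      rw [← Real.rpow_add hDpos]; ring_nf
    have hMpos : (0 : ℝ) < ((m : ℝ) + 1) ^ 2 + 1 := by positivity
    have hNpos : (0 : ℝ) < (n : ℝ) := by linarith
    -- bound each factor from below
    have hb1 : ((n : ℝ) ^ 2 / 8) ^ (q / 3) ≤ D ^ (q / 3) := by
      apply Real.rpow_le_rpow (by positivity) (by nlinarith) (by linarith)
    have hb2 : ((((m : ℝ) + 1) ^ 2 + 1) / 2) ^ (q / 6) ≤ D ^ (q / 6) := by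
      apply Real.rpow_le_rpow (by positivity) (by linarith) (by linarith)
    have hD3pos : (0 : ℝ) < D ^ (q / 3) := Real.rpow_pos_of_pos hDpos _
    have hD6pos : (0 : ℝ) < D ^ (q / 6) := Real.rpow_pos_of_pos hDpos _
    have hinv : 1 / D ^ (q / 2) ≤
        (8 : ℝ) ^ (q / 3) * ((n : ℝ) ^ 2) ^ (-(q / 3)) *
          ((2 : ℝ) ^ (q / 6) * (((m : ℝ) + 1) ^ 2 + 1) ^ (-(q / 6))) := by
      rw [hsplit]
      have e1 : (8 : ℝ) ^ (q / 3) * ((n : ℝ) ^ 2) ^ (-(q / 3)) =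
          (((n : ℝ) ^ 2 / 8) ^ (q / 3))⁻¹ := by
        rw [Real.div_rpow (by positivity) (by norm_num), Real.rpow_neg (by positivity),
          inv_div]
        exact (div_eq_mul_inv _ _).symm
      have e2 : (2 : ℝ) ^ (q / 6) * (((m : ℝ) + 1) ^ 2 + 1) ^ (-(q / 6)) =
          (((((m : ℝ) + 1) ^ 2 + 1) / 2) ^ (q / 6))⁻¹ := by
        rw [Real.div_rpow (by positivity) (by norm_num), Real.rpow_neg (by positivity),
          inv_div]
        exact (div_eq_mul_inv _ _).symm
      rw [e1, e2, one_div, mul_inv]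
      have p1 : (0 : ℝ) < ((n : ℝ) ^ 2 / 8) ^ (q / 3) := by positivity
      have p2 : (0 : ℝ) < ((((m : ℝ) + 1) ^ 2 + 1) / 2) ^ (q / 6) := by positivity
      exact mul_le_mul (inv_anti₀ p1 hb1) (inv_anti₀ p2 hb2)
        (by positivity) (by positivity)
    have hcoef : -(-(n : ℝ) / 2) - 1 / 2 ≤ (n : ℝ) := by linarith
    have hrhs : (-(-(n : ℝ) / 2) - 1 / 2) * (1 / D ^ (q / 2)) ≤
        (n : ℝ) * ((8 : ℝ) ^ (q / 3) * ((n : ℝ) ^ 2) ^ (-(q / 3)) *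
          ((2 : ℝ) ^ (q / 6) * (((m : ℝ) + 1) ^ 2 + 1) ^ (-(q / 6)))) := by
      apply mul_le_mul hcoef hinv (by positivity) (by positivity)
    refine hrhs.trans (le_of_eq ?_)
    have en : ((n : ℝ) ^ 2) ^ (-(q / 3)) = (n : ℝ) ^ (-(2 * q / 3)) := by
      rw [← Real.rpow_natCast (n : ℝ) 2, ← Real.rpow_mul hNpos.le]
      norm_num
      ring_nf
    have en2 : (n : ℝ) * (n : ℝ) ^ (-(2 * q / 3)) = (n : ℝ) ^ (1 - 2 * q / 3) := by
      rw [show (1 : ℝ) - 2 * q / 3 = 1 + -(2 * q / 3) by ring, Real.rpow_add hNpos,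
        Real.rpow_one]
    rw [en, hC, ← en2]
    ring
end

section
/- Let l range over negative half-integers (l ∈ ½ℤ, l ≤ -½), with ε = 0 if l ∈ ℤ and ε = ½ if 2l is odd, and let m range over integers with m ≥ -l - ε, writing m' = m + ε. Then the series ∑_l (-l - ½) ∑_m 1/(-½ l(l+1) + m'(m'+1) + 9/8)^{q/2} converges for q > 3. -/
private lemma key_D_lb (q n t : ℝ) (hq : 3 < q) (hn : 1 ≤ n) (ht : 0 ≤ t) :
    (t + n / 2) ^ 2 / 2
      ≤ -(1 / 2) * (-n / 2) * (-n / 2 + 1) + (t + n / 2) * (t + n / 2 + 1) + 9 / 8 := by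
  nlinarith [sq_nonneg t, mul_nonneg ht (by linarith : (0:ℝ) ≤ n)]

private lemma key_nonneg (q n t : ℝ) (hq : 3 < q) (hn : 1 ≤ n) (ht : 0 ≤ t) :
    0 ≤ (-(-n / 2) - 1 / 2) *
        (1 / (-(1 / 2) * (-n / 2) * (-n / 2 + 1) + (t + n / 2) * (t + n / 2 + 1) + 9 / 8)
          ^ (q / 2)) := by
  apply mul_nonneg (by linarith)
  apply div_nonneg zero_le_one
  apply Real.rpow_nonneg
  nlinarith [key_D_lb q n t hq hn ht, sq_nonneg (t + n / 2)]

private lemma key_bound (q n t : ℝ) (hq : 3 < q) (hn : 1 ≤ n) (ht : 0 ≤ t) :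
    (-(-n / 2) - 1 / 2) *
        (1 / (-(1 / 2) * (-n / 2) * (-n / 2 + 1) + (t + n / 2) * (t + n / 2 + 1) + 9 / 8)
          ^ (q / 2))
      ≤ (2 : ℝ) ^ (q - 1 + q / 2) *
          (n ^ (-((q - 1) / 2)) * (t + 1) ^ (-((q - 1) / 2))) := by
  have hs0 : (0:ℝ) < (q - 1) / 2 := by linarith
  set s : ℝ := (q - 1) / 2 with hs
  set m' : ℝ := t + n / 2 with hm'def
  have hm0 : (0:ℝ) < m' := by rw [hm'def]; linarith
  set D : ℝ := -(1 / 2) * (-n / 2) * (-n / 2 + 1) + m' * (m' + 1) + 9 / 8 with hDdef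
  have hle : m' ^ 2 / 2 ≤ D := key_D_lb q n t hq hn ht
  have hDpos : (0:ℝ) < D := lt_of_lt_of_le (by positivity) hle
  have h1 : (m' ^ 2 / 2) ^ (q / 2) ≤ D ^ (q / 2) :=
    Real.rpow_le_rpow (by positivity) hle (by linarith)
  have h2 : (m' ^ 2 / 2) ^ (q / 2) = m' ^ q / (2:ℝ) ^ (q / 2) := by
    rw [Real.div_rpow (by positivity) (by norm_num)]
    congr 1
    rw [← Real.rpow_natCast m' 2, ← Real.rpow_mul hm0.le]
    norm_num
    congr 1
    ring
  have h3 : m' ^ q = m' ^ (1:ℝ) * m' ^ s * m' ^ s := by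
    rw [← Real.rpow_add hm0, ← Real.rpow_add hm0, hs]; ring_nf
  have hQX : m' * m' ^ s * m' ^ s ≤ (2:ℝ) ^ (q / 2) * D ^ (q / 2) := by
    have := h1
    rw [h2, div_le_iff₀ (by positivity : (0:ℝ) < (2:ℝ) ^ (q/2))] at this
    calc m' * m' ^ s * m' ^ s = m' ^ q := by rw [h3, Real.rpow_one]
      _ ≤ D ^ (q / 2) * (2:ℝ) ^ (q / 2) := this
      _ = (2:ℝ) ^ (q / 2) * D ^ (q / 2) := by ring
  have hA : n ^ s ≤ (2:ℝ) ^ s * m' ^ s := by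
    rw [← Real.mul_rpow (by norm_num) hm0.le]
    exact Real.rpow_le_rpow (by linarith) (by rw [hm'def]; linarith) hs0.le
  have hB : (t + 1) ^ s ≤ (2:ℝ) ^ s * m' ^ s := by
    rw [← Real.mul_rpow (by norm_num) hm0.le]
    exact Real.rpow_le_rpow (by linarith) (by rw [hm'def]; linarith) hs0.le
  have hC2 : (2:ℝ) ^ (q - 1 + q / 2) = (2:ℝ) ^ s * (2:ℝ) ^ s * (2:ℝ) ^ (q / 2) := by
    rw [← Real.rpow_add (by norm_num), ← Real.rpow_add (by norm_num), hs]; ring_nf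
  rw [Real.rpow_neg (by linarith : (0:ℝ) ≤ n), Real.rpow_neg (by linarith : (0:ℝ) ≤ t + 1),
    hC2]
  have hAp : (0:ℝ) < n ^ s := Real.rpow_pos_of_pos (by linarith) s
  have hBp : (0:ℝ) < (t + 1) ^ s := Real.rpow_pos_of_pos (by linarith) s
  have hYp : (0:ℝ) < m' ^ s := Real.rpow_pos_of_pos hm0 s
  have hPp : (0:ℝ) < (2:ℝ) ^ s := Real.rpow_pos_of_pos (by norm_num) s
  have hXp : (0:ℝ) < D ^ (q / 2) := Real.rpow_pos_of_pos hDpos _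
  rw [show (-(-n / 2) - 1 / 2) * (1 / D ^ (q / 2)) = (-(-n / 2) - 1 / 2) / D ^ (q / 2) by ring,
    show (2:ℝ) ^ s * (2:ℝ) ^ s * (2:ℝ) ^ (q / 2) * ((n ^ s)⁻¹ * ((t + 1) ^ s)⁻¹)
      = ((2:ℝ) ^ s * (2:ℝ) ^ s * (2:ℝ) ^ (q / 2)) / (n ^ s * (t + 1) ^ s) by
        field_simp,
    div_le_div_iff₀ hXp (by positivity)]
  have key : (-(-n / 2) - 1 / 2) * (n ^ s * (t + 1) ^ s)
      ≤ m' * (((2:ℝ) ^ s * m' ^ s) * ((2:ℝ) ^ s * m' ^ s)) := by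
    apply mul_le_mul (by rw [hm'def]; linarith)
      (mul_le_mul hA hB hBp.le (by positivity)) (by positivity) hm0.le
  calc (-(-n / 2) - 1 / 2) * (n ^ s * (t + 1) ^ s)
      ≤ m' * (((2:ℝ) ^ s * m' ^ s) * ((2:ℝ) ^ s * m' ^ s)) := key
    _ = (2:ℝ) ^ s * (2:ℝ) ^ s * (m' * m' ^ s * m' ^ s) := by ring
    _ ≤ (2:ℝ) ^ s * (2:ℝ) ^ s * ((2:ℝ) ^ (q / 2) * D ^ (q / 2)) := by
        apply mul_le_mul_of_nonneg_left hQX (by positivity)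
    _ = (2:ℝ) ^ s * (2:ℝ) ^ s * (2:ℝ) ^ (q / 2) * D ^ (q / 2) := by ring

private lemma ge_half (n : ℕ+) (m : ℤ)
    (h : (m : ℝ) ≥ (n : ℝ) / 2 - (if Even (n : ℕ) then (0 : ℝ) else 1 / 2)) :
    ((n : ℕ) : ℤ) / 2 ≤ m := by
  rcases Nat.even_or_odd (n : ℕ) with ⟨k, hk⟩ | ⟨k, hk⟩
  · rw [if_pos ⟨k, hk⟩] at h
    have hnR : ((n : ℕ) : ℝ) = (k : ℝ) + (k : ℝ) := by exact_mod_cast hk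
    have h1 : (k : ℝ) ≤ (m : ℝ) := by rw [hnR] at h; linarith
    have h2 : (k : ℤ) ≤ m := by exact_mod_cast h1
    have h3 : ((n : ℕ) : ℤ) = (k : ℤ) + (k : ℤ) := by exact_mod_cast hk
    omega
  · rw [if_neg (by simpa using (Nat.not_even_iff_odd.mpr ⟨k, hk⟩))] at h
    have hnR : ((n : ℕ) : ℝ) = 2 * (k : ℝ) + 1 := by exact_mod_cast hk
    have h1 : (k : ℝ) ≤ (m : ℝ) := by rw [hnR] at h; linarith
    have h2 : (k : ℤ) ≤ m := by exact_mod_cast h1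
    have h3 : ((n : ℕ) : ℤ) = 2 * (k : ℤ) + 1 := by exact_mod_cast hk
    omega

private lemma mprime_eq (n : ℕ+) (m : ℤ)
    (h : (m : ℝ) ≥ (n : ℝ) / 2 - (if Even (n : ℕ) then (0 : ℝ) else 1 / 2)) :
    (m : ℝ) + (if Even (n : ℕ) then (0 : ℝ) else 1 / 2)
      = (((m - ((n : ℕ) : ℤ) / 2).toNat : ℕ) : ℝ) + (n : ℝ) / 2 := by
  have h0 := ge_half n m h
  have ht : (((m - ((n : ℕ) : ℤ) / 2).toNat : ℤ)) = m - ((n : ℕ) : ℤ) / 2 :=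
    Int.toNat_of_nonneg (by omega)
  have htR : (((m - ((n : ℕ) : ℤ) / 2).toNat : ℕ) : ℝ)
      = (m : ℝ) - ((((n : ℕ) : ℤ) / 2 : ℤ) : ℝ) := by
    rw [← Int.cast_natCast, ht]; push_cast; ring
  rcases Nat.even_or_odd (n : ℕ) with ⟨k, hk⟩ | ⟨k, hk⟩
  · rw [if_pos ⟨k, hk⟩, htR]
    have h3 : ((n : ℕ) : ℤ) = (k : ℤ) + (k : ℤ) := by exact_mod_cast hk
    have h4 : ((n : ℕ) : ℤ) / 2 = (k : ℤ) := by omega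
    have hnR : ((n : ℕ) : ℝ) = (k : ℝ) + (k : ℝ) := by exact_mod_cast hk
    rw [h4, hnR]; push_cast; ring
  · rw [if_neg (by simpa using (Nat.not_even_iff_odd.mpr ⟨k, hk⟩)), htR]
    have h3 : ((n : ℕ) : ℤ) = 2 * (k : ℤ) + 1 := by exact_mod_cast hk
    have h4 : ((n : ℕ) : ℤ) / 2 = (k : ℤ) := by omega
    have hnR : ((n : ℕ) : ℝ) = 2 * (k : ℝ) + 1 := by exact_mod_cast hk
    rw [h4, hnR]; push_cast; ring

/-- With `l` ranging over negative half-integers (parametrized by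
`n : ℕ+` via `l = -n/2`), `ε = 0` if `l ∈ ℤ` and `ε = 1/2` if `2l` is odd, and `m`
ranging over integers with `m ≥ -l - ε` (writing `m' = m + ε`), the series
`∑_l (-l - 1/2) ∑_m (-(1/2) l(l+1) + m'(m'+1) + 9/8)^(-q/2)` converges for `q > 3`. -/
theorem positive_discrete_series_summable (q : ℝ) (hq : 3 < q) :
    Summable (fun p : Σ n : ℕ+, {m : ℤ //
        (m : ℝ) ≥ (n : ℝ) / 2 - (if Even (n : ℕ) then (0 : ℝ) else 1 / 2)} =>
      let l : ℝ := -(p.1 : ℝ) / 2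
      let ε : ℝ := if Even (p.1 : ℕ) then 0 else 1 / 2
      let m' : ℝ := (p.2 : ℤ) + ε
      (-l - 1 / 2) * (1 / (-(1 / 2) * l * (l + 1) + m' * (m' + 1) + 9 / 8) ^ (q / 2))) := by
  have hs1 : -((q - 1) / 2) < -1 := by linarith
  have hf0 : Summable (fun n : ℕ => (n : ℝ) ^ (-((q - 1) / 2))) :=
    Real.summable_nat_rpow.2 hs1
  have hf : Summable (fun n : ℕ+ => ((n : ℕ) : ℝ) ^ (-((q - 1) / 2))) :=
    hf0.comp_injective (fun a b h => PNat.coe_injective h)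
  have hg : Summable (fun t : ℕ => ((t : ℝ) + 1) ^ (-((q - 1) / 2))) := by
    have h := hf0.comp_injective Nat.succ_injective
    have heq : (fun t : ℕ => ((t : ℝ) + 1) ^ (-((q - 1) / 2)))
        = (fun n : ℕ => (n : ℝ) ^ (-((q - 1) / 2))) ∘ Nat.succ := by
      funext t
      simp only [Function.comp_apply, Nat.succ_eq_add_one]
      norm_cast
    rw [heq]
    exact h
  have hF : Summable (fun x : ℕ+ × ℕ =>
      ((x.1 : ℕ) : ℝ) ^ (-((q - 1) / 2)) * ((x.2 : ℝ) + 1) ^ (-((q - 1) / 2))) :=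
    hf.mul_of_nonneg hg (fun n => Real.rpow_nonneg (by positivity) _)
      (fun t => Real.rpow_nonneg (by positivity) _)
  have hFC := hF.mul_left ((2:ℝ) ^ (q - 1 + q / 2))
  set i : (Σ n : ℕ+, {m : ℤ //
      (m : ℝ) ≥ (n : ℝ) / 2 - (if Even (n : ℕ) then (0 : ℝ) else 1 / 2)}) → ℕ+ × ℕ :=
    fun p => (p.1, (p.2.1 - ((p.1 : ℕ) : ℤ) / 2).toNat) with hidef
  have hi : Function.Injective i := by
    rintro ⟨n, m, hm⟩ ⟨n', m2, hm2⟩ h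
    simp only [hidef, Prod.mk.injEq] at h
    obtain ⟨h1, h2⟩ := h
    subst h1
    have l1 := ge_half n m hm
    have l2 := ge_half n m2 hm2
    have h3 := congrArg (fun t : ℕ => (t : ℤ)) h2
    simp only [Int.toNat_of_nonneg (by omega : (0:ℤ) ≤ m - ((n : ℕ) : ℤ) / 2),
      Int.toNat_of_nonneg (by omega : (0:ℤ) ≤ m2 - ((n : ℕ) : ℤ) / 2)] at h3
    have : m = m2 := by omega
    subst this
    rfl
  refine Summable.of_nonneg_of_le ?_ ?_ (hFC.comp_injective hi)
  · rintro ⟨n, m, hm⟩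
    dsimp only
    have hn1 : (1:ℝ) ≤ ((n : ℕ) : ℝ) := by exact_mod_cast n.one_le
    have l1 := ge_half n m hm
    have l2 := mprime_eq n m hm
    rw [l2]
    exact key_nonneg q _ _ hq hn1 (Nat.cast_nonneg _)
  · rintro ⟨n, m, hm⟩
    dsimp only [Function.comp, hidef]
    have hn1 : (1:ℝ) ≤ ((n : ℕ) : ℝ) := by exact_mod_cast n.one_le
    have l2 := mprime_eq n m hm
    rw [l2]
    exact key_bound q _ _ hq hn1 (Nat.cast_nonneg _)
end

section
/- Let T be a symmetric densely defined operator on a Hilbert space H such that dom(T²) is dense. If T² is essentially self-adjoint on dom(T²), then T is essentially self-adjoint. -/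
open scoped InnerProductSpace
open LinearPMap

section Helpers
set_option linter.unusedSectionVars false

variable {H : Type*} [NormedAddCommGroup H] [InnerProductSpace ℂ H] [CompleteSpace H]




theorem myAdjoint_isClosed (f : H →ₗ.[ℂ] H) (hf : Dense (f.domain : Set H)) :
    f.adjoint.IsClosed := by
  have hgraph : (f.adjoint.graph : Set (H × H)) =
      ⋂ x : f.domain, {p : H × H | ⟪p.2, (x : H)⟫_ℂ = ⟪p.1, f x⟫_ℂ} := by
    ext ⟨y, z⟩
    simp only [Set.mem_iInter, Set.mem_setOf_eq, SetLike.mem_coe, LinearPMap.mem_graph_iff]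
    constructor
    · rintro ⟨u, hu1, hu2⟩ x
      subst hu2
      cases u with
      | mk uv huv =>
        cases hu1
        exact (adjoint_isFormalAdjoint hf ⟨uv, huv⟩ x)
    · intro h
      have hy : y ∈ f.adjoint.domain := mem_adjoint_domain_of_exists _ ⟨z, h⟩
      exact ⟨⟨y, hy⟩, rfl, adjoint_apply_eq hf _ h⟩
  rw [LinearPMap.IsClosed, hgraph]
  exact isClosed_iInter fun x =>
    isClosed_eq (Continuous.inner continuous_snd continuous_const)
      (Continuous.inner continuous_fst continuous_const)



theorem myClosure_graph_coe (f : H →ₗ.[ℂ] H) (hf : f.IsClosable) :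
    (f.closure.graph : Set (H × H)) = closure (f.graph : Set (H × H)) := by
  rw [← hf.graph_closure_eq_closure_graph, Submodule.topologicalClosure_coe]

/-- Key: the adjoint pairing extends to the closure. -/
theorem myAdjoint_pairing_closure (f : H →ₗ.[ℂ] H) (hf : Dense (f.domain : Set H))
    (hcl : f.IsClosable) (y : f.adjoint.domain) (v : f.closure.domain) :
    ⟪(f.adjoint y : H), (v : H)⟫_ℂ = ⟪(y : H), f.closure v⟫_ℂ := by
  have hv : ((v : H), f.closure v) ∈ closure (f.graph : Set (H × H)) := by
    rw [← myClosure_graph_coe f hcl]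
    exact f.closure.mem_graph v
  have hsub : closure (f.graph : Set (H × H)) ⊆
      {p : H × H | ⟪(f.adjoint y : H), p.1⟫_ℂ = ⟪(y : H), p.2⟫_ℂ} := by
    refine closure_minimal ?_
      (isClosed_eq (Continuous.inner continuous_const continuous_fst)
        (Continuous.inner continuous_const continuous_snd))
    intro p hp
    rw [SetLike.mem_coe, LinearPMap.mem_graph_iff] at hp
    obtain ⟨u, hu1, hu2⟩ := hp
    simp only [Set.mem_setOf_eq]
    rw [← hu1, ← hu2]
    exact adjoint_isFormalAdjoint hf y u
  exact hsub hv

theorem myAdjoint_le_closure_adjoint (f : H →ₗ.[ℂ] H) (hf : Dense (f.domain : Set H))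
    (hcl : f.IsClosable) : f.adjoint ≤ f.closure.adjoint := by
  have hd' : Dense (f.closure.domain : Set H) := by
    refine hf.mono ?_
    exact fun x hx => f.le_closure.1 hx
  constructor
  · intro y hy
    exact mem_adjoint_domain_of_exists _
      ⟨f.adjoint ⟨y, hy⟩, fun v => myAdjoint_pairing_closure f hf hcl ⟨y, hy⟩ v⟩
  · intro a b hab
    refine (adjoint_apply_eq hd' b fun v => ?_).symm
    rw [← hab]
    exact myAdjoint_pairing_closure f hf hcl a v

theorem myClosure_symmetric (f : H →ₗ.[ℂ] H)
    (hsym : ∀ x y : f.domain, ⟪f x, (y : H)⟫_ℂ = ⟪(x : H), f y⟫_ℂ)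
    (hcl : f.IsClosable) (x y : f.closure.domain) :
    ⟪f.closure x, (y : H)⟫_ℂ = ⟪(x : H), f.closure y⟫_ℂ := by
  set G := (f.graph : Set (H × H)) with hG
  have step1 : ∀ q ∈ G, ∀ p ∈ closure G, ⟪p.2, q.1⟫_ℂ = ⟪p.1, q.2⟫_ℂ := by
    intro q hq p hp
    rw [SetLike.mem_coe, LinearPMap.mem_graph_iff] at hq
    obtain ⟨v, hv1, hv2⟩ := hq
    have : closure G ⊆ {p : H × H | ⟪p.2, q.1⟫_ℂ = ⟪p.1, q.2⟫_ℂ} := by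
      refine closure_minimal ?_
        (isClosed_eq (Continuous.inner continuous_snd continuous_const)
          (Continuous.inner continuous_fst continuous_const))
      intro r hr
      rw [SetLike.mem_coe, LinearPMap.mem_graph_iff] at hr
      obtain ⟨u, hu1, hu2⟩ := hr
      simp only [Set.mem_setOf_eq]
      rw [← hu1, ← hu2, ← hv1, ← hv2]
      exact hsym u v
    exact this hp
  have step2 : ∀ p ∈ closure G, ∀ q ∈ closure G, ⟪p.2, q.1⟫_ℂ = ⟪p.1, q.2⟫_ℂ := by
    intro p hp q hq
    have : closure G ⊆ {q : H × H | ⟪p.2, q.1⟫_ℂ = ⟪p.1, q.2⟫_ℂ} := by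
      refine closure_minimal ?_
        (isClosed_eq (Continuous.inner continuous_const continuous_fst)
          (Continuous.inner continuous_const continuous_snd))
      intro q' hq'
      exact step1 q' hq' p hp
    exact this hq
  have hx : ((x : H), f.closure x) ∈ closure G := by
    rw [← myClosure_graph_coe f hcl]; exact f.closure.mem_graph x
  have hy : ((y : H), f.closure y) ∈ closure G := by
    rw [← myClosure_graph_coe f hcl]; exact f.closure.mem_graph y
  exact step2 _ hx _ hy



/-- The range submodule of `A + c`. -/
noncomputable def myRange (A : H →ₗ.[ℂ] H) (c : ℂ) : Submodule ℂ H :=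
  LinearMap.range (A.toFun + c • A.domain.subtype)

theorem myRange_mem (A : H →ₗ.[ℂ] H) (c : ℂ) (y : H) :
    y ∈ myRange A c ↔ ∃ x : A.domain, (A x : H) + c • (x : H) = y := by
  simp only [myRange, LinearMap.mem_range, LinearMap.add_apply, LinearMap.smul_apply,
    Submodule.coe_subtype]
  rfl

theorem myNorm_sq (A : H →ₗ.[ℂ] H)
    (hsym : ∀ x y : A.domain, ⟪A x, (y : H)⟫_ℂ = ⟪(x : H), A y⟫_ℂ)
    (c : ℂ) (hc : c = Complex.I ∨ c = -Complex.I) (x : A.domain) :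
    ‖(A x : H) + c • (x : H)‖ ^ 2 = ‖(A x : H)‖ ^ 2 + ‖(x : H)‖ ^ 2 := by
  have hre : (⟪(A x : H), (x : H)⟫_ℂ).im = 0 := by
    have h1 : (starRingEnd ℂ) ⟪(A x : H), (x : H)⟫_ℂ = ⟪(A x : H), (x : H)⟫_ℂ := by
      rw [inner_conj_symm, hsym x x]
    exact Complex.conj_eq_iff_im.mp h1
  have hcre : c.re = 0 := by rcases hc with h | h <;> simp [h]
  have hnc : ‖c‖ = 1 := by rcases hc with h | h <;> simp [h]
  have hcross : RCLike.re ⟪(A x : H), c • (x : H)⟫_ℂ = 0 := by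
    rw [inner_smul_right]
    simp only [RCLike.re_to_complex, Complex.mul_re]
    rw [hcre, hre]
    ring
  rw [@norm_add_sq ℂ _ _ _ _ (A x : H) (c • (x : H)), hcross, norm_smul, hnc]
  ring

theorem myRange_isClosed (A : H →ₗ.[ℂ] H) (hA : A.IsClosed)
    (hsym : ∀ x y : A.domain, ⟪A x, (y : H)⟫_ℂ = ⟪(x : H), A y⟫_ℂ)
    (c : ℂ) (hc : c = Complex.I ∨ c = -Complex.I) :
    IsClosed ((myRange A c : Submodule ℂ H) : Set H) := by
  have hbound : ∀ x : A.domain, ‖(x : H)‖ ≤ ‖(A x : H) + c • (x : H)‖ ∧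
      ‖(A x : H)‖ ≤ ‖(A x : H) + c • (x : H)‖ := by
    intro x
    have h := myNorm_sq A hsym c hc x
    constructor
    · refine abs_le_abs (by nlinarith [sq_nonneg ‖(A x : H)‖, norm_nonneg ((A x : H) + c • (x : H)), norm_nonneg (x : H), sq_abs ‖(x:H)‖]) ?_ |>.trans_eq (abs_norm _) |>.trans_eq' (abs_norm _)
      · nlinarith [norm_nonneg ((A x : H) + c • (x : H)), norm_nonneg (x : H)]
    · refine abs_le_abs ?_ ?_ |>.trans_eq (abs_norm _) |>.trans_eq' (abs_norm _)
      · nlinarith [norm_nonneg ((A x : H) + c • (x : H)), norm_nonneg (A x : H)]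
      · nlinarith [norm_nonneg ((A x : H) + c • (x : H)), norm_nonneg (A x : H)]
  refine IsSeqClosed.isClosed ?_
  intro ys y hys hy
  choose x hx using fun n => (myRange_mem A c (ys n)).mp (hys n)
  have hysc : CauchySeq ys := hy.cauchySeq
  have hdiff : ∀ n m, (A (x n - x m) : H) + c • ((x n - x m : A.domain) : H) = ys n - ys m := by
    intro n m
    rw [A.map_sub]
    have : ((x n - x m : A.domain) : H) = (x n : H) - (x m : H) := rfl
    rw [this, smul_sub, ← hx n, ← hx m]
    abel
  have hcx : CauchySeq (fun n => ((x n : H))) := by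
    rw [Metric.cauchySeq_iff] at hysc ⊢
    intro ε hε
    obtain ⟨N, hN⟩ := hysc ε hε
    refine ⟨N, fun n hn m hm => ?_⟩
    have := (hbound (x n - x m)).1
    rw [hdiff n m] at this
    calc dist ((x n : H)) ((x m : H)) = ‖((x n - x m : A.domain) : H)‖ := by
          rw [dist_eq_norm]; push_cast; ring_nf
      _ ≤ ‖ys n - ys m‖ := this
      _ = dist (ys n) (ys m) := (dist_eq_norm _ _).symm
      _ < ε := hN n hn m hm
  have hcAx : CauchySeq (fun n => ((A (x n) : H))) := by
    rw [Metric.cauchySeq_iff] at hysc ⊢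
    intro ε hε
    obtain ⟨N, hN⟩ := hysc ε hε
    refine ⟨N, fun n hn m hm => ?_⟩
    have := (hbound (x n - x m)).2
    rw [hdiff n m] at this
    calc dist ((A (x n) : H)) ((A (x m) : H)) = ‖(A (x n - x m) : H)‖ := by
          rw [dist_eq_norm, A.map_sub]
      _ ≤ ‖ys n - ys m‖ := this
      _ = dist (ys n) (ys m) := (dist_eq_norm _ _).symm
      _ < ε := hN n hn m hm
  obtain ⟨u, hu⟩ := cauchySeq_tendsto_of_complete hcx
  obtain ⟨w, hw⟩ := cauchySeq_tendsto_of_complete hcAx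
  have hmem : ((u, w) : H × H) ∈ A.graph := by
    refine hA.mem_of_tendsto (hu.prodMk_nhds hw) ?_
    exact Filter.Eventually.of_forall fun n => A.mem_graph (x n)
  rw [LinearPMap.mem_graph_iff] at hmem
  obtain ⟨v, hv1, hv2⟩ := hmem
  rw [SetLike.mem_coe, myRange_mem]
  refine ⟨v, ?_⟩
  have hlim : Filter.Tendsto ys Filter.atTop (nhds (w + c • u)) := by
    have : ys = fun n => (A (x n) : H) + c • ((x n : H)) := by
      funext n; rw [← hx n]
    rw [this]
    exact hw.add ((hu.const_smul c))
  show (A v : H) + c • (v : H) = y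
  rw [hv1, hv2]
  show w + c • u = y
  exact tendsto_nhds_unique hlim hy


end Helpers

/-- Reed–Simon, Problem X.28. Let `T` be a symmetric densely defined
operator on a Hilbert space `H` such that the domain of `T²` is dense. If `T²` is
essentially self-adjoint on its domain, then `T` is essentially self-adjoint.
Here `S` plays the role of `T²`: its domain is `{x ∈ dom T | Tx ∈ dom T}` and it acts
by `S x = T (T x)`; essential self-adjointness of an operator means that its closure
is self-adjoint. -/
theorem essSelfAdjoint_of_sq_essSelfAdjoint
    {H : Type*} [NormedAddCommGroup H] [InnerProductSpace ℂ H] [CompleteSpace H]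
    (T S : H →ₗ.[ℂ] H)
    (hT_dense : Dense (T.domain : Set H))
    (hsymm : ∀ x y : T.domain, ⟪T x, (y : H)⟫_ℂ = ⟪(x : H), T y⟫_ℂ)
    (hSdom : ∀ x : H, x ∈ S.domain ↔ ∃ hx : x ∈ T.domain, (T ⟨x, hx⟩ : H) ∈ T.domain)
    (hSapp : ∀ (x : S.domain) (hx : (x : H) ∈ T.domain)
      (hTx : (T ⟨(x : H), hx⟩ : H) ∈ T.domain), S x = T ⟨T ⟨(x : H), hx⟩, hTx⟩)
    (hS_dense : Dense (S.domain : Set H))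
    (hS_essa : IsSelfAdjoint S.closure) :
    IsSelfAdjoint T.closure := by
  rw [LinearPMap.isSelfAdjoint_def] at hS_essa ⊢
  set A := T.closure with hA_def
  have hTfa : T.IsFormalAdjoint T := fun x y => hsymm x y
  have hT_le_adj : T ≤ T.adjoint := hTfa.le_adjoint hT_dense
  have hT_closable : T.IsClosable :=
    ((myAdjoint_isClosed T hT_dense).isClosable).leIsClosable hT_le_adj
  have hA_dense : Dense (A.domain : Set H) :=
    hT_dense.mono (fun x hx => T.le_closure.1 hx)
  have hA_symm : ∀ x y : A.domain, ⟪A x, (y : H)⟫_ℂ = ⟪(x : H), A y⟫_ℂ :=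
    myClosure_symmetric T hsymm hT_closable
  have hA_closed : A.IsClosed := hT_closable.closure_isClosed
  have hAfa : A.IsFormalAdjoint A := fun x y => hA_symm x y
  have hA_le_adj : A ≤ A.adjoint := hAfa.le_adjoint hA_dense
  -- `S` is symmetric
  have hSsymm : ∀ x y : S.domain, ⟪S x, (y : H)⟫_ℂ = ⟪(x : H), S y⟫_ℂ := by
    intro x y
    obtain ⟨hx, hTx⟩ := (hSdom x).mp x.2
    obtain ⟨hy, hTy⟩ := (hSdom y).mp y.2
    rw [hSapp x hx hTx, hSapp y hy hTy]
    calc ⟪(T ⟨T ⟨(x : H), hx⟩, hTx⟩ : H), (y : H)⟫_ℂ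
        = ⟪(T ⟨(x : H), hx⟩ : H), (T ⟨(y : H), hy⟩ : H)⟫_ℂ :=
          hsymm ⟨T ⟨(x : H), hx⟩, hTx⟩ ⟨(y : H), hy⟩
      _ = ⟪(x : H), (T ⟨T ⟨(y : H), hy⟩, hTy⟩ : H)⟫_ℂ :=
          hsymm ⟨(x : H), hx⟩ ⟨T ⟨(y : H), hy⟩, hTy⟩
  have hSfa : S.IsFormalAdjoint S := fun x y => hSsymm x y
  have hS_le_adj : S ≤ S.adjoint := hSfa.le_adjoint hS_dense
  have hS_closable : S.IsClosable :=
    ((myAdjoint_isClosed S hS_dense).isClosable).leIsClosable hS_le_adj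
  -- the closure of `S` is nonnegative
  have hSnn : ∀ x : S.closure.domain, 0 ≤ (⟪(x : H), S.closure x⟫_ℂ).re := by
    intro x
    have hx : ((x : H), S.closure x) ∈ closure (S.graph : Set (H × H)) := by
      rw [← myClosure_graph_coe S hS_closable]; exact S.closure.mem_graph x
    have hsub : closure (S.graph : Set (H × H)) ⊆ {p : H × H | 0 ≤ (⟪p.1, p.2⟫_ℂ).re} := by
      refine closure_minimal ?_ ?_
      · intro p hp
        rw [SetLike.mem_coe, LinearPMap.mem_graph_iff] at hp
        obtain ⟨v, hv1, hv2⟩ := hp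
        obtain ⟨hv, hTv⟩ := (hSdom v).mp v.2
        simp only [Set.mem_setOf_eq]
        rw [← hv1, ← hv2, hSapp v hv hTv]
        have h2 : ⟪(v : H), (T ⟨T ⟨(v : H), hv⟩, hTv⟩ : H)⟫_ℂ
            = ⟪(T ⟨(v : H), hv⟩ : H), (T ⟨(v : H), hv⟩ : H)⟫_ℂ := by
          rw [← inner_conj_symm, hsymm ⟨T ⟨(v : H), hv⟩, hTv⟩ ⟨(v : H), hv⟩,
            inner_conj_symm]
        rw [h2]
        have h3 := inner_self_nonneg (𝕜 := ℂ) (x := (T ⟨(v : H), hv⟩ : H))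
        rwa [RCLike.re_to_complex] at h3
      · exact IsClosed.preimage
          (Complex.continuous_re.comp (Continuous.inner continuous_fst continuous_snd))
          isClosed_Ici
    exact hsub hx
  -- the deficiency spaces vanish
  have heigen : ∀ c : ℂ, c ^ 2 = -1 → ∀ u : A.adjoint.domain,
      (A.adjoint u : H) = c • (u : H) → (u : H) = 0 := by
    intro c hc u hu
    have hpair : ∀ (z : H) (hz : z ∈ T.domain),
        ⟪(u : H), (T ⟨z, hz⟩ : H)⟫_ℂ = (starRingEnd ℂ) c * ⟪(u : H), z⟫_ℂ := by
      intro z hz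
      have hzA : z ∈ A.domain := T.le_closure.1 hz
      have h1 : ⟪(A.adjoint u : H), z⟫_ℂ = ⟪(u : H), (A ⟨z, hzA⟩ : H)⟫_ℂ :=
        adjoint_isFormalAdjoint hA_dense u ⟨z, hzA⟩
      have h2 : (A ⟨z, hzA⟩ : H) = T ⟨z, hz⟩ := (T.le_closure.2 (x := ⟨z, hz⟩) rfl).symm
      rw [h2, hu, inner_smul_left] at h1
      exact h1.symm
    have hw : ∀ x : S.domain, ⟪(-(u : H) : H), (x : H)⟫_ℂ = ⟪(u : H), S x⟫_ℂ := by
      intro x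
      obtain ⟨hx, hTx⟩ := (hSdom x).mp x.2
      rw [hSapp x hx hTx, hpair _ hTx, hpair _ hx, inner_neg_left, ← mul_assoc,
        ← map_mul, ← sq, hc]
      simp
    have huS : (u : H) ∈ S.adjoint.domain := mem_adjoint_domain_of_exists _ ⟨-(u : H), hw⟩
    have hval : (S.adjoint ⟨(u : H), huS⟩ : H) = -(u : H) := adjoint_apply_eq hS_dense _ hw
    have hSle : S.adjoint ≤ S.closure := by
      rw [← hS_essa]
      exact myAdjoint_le_closure_adjoint S hS_dense hS_closable
    have huSc : (u : H) ∈ S.closure.domain := hSle.1 huS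
    have hval2 : (S.closure ⟨(u : H), huSc⟩ : H) = -(u : H) := by
      rw [← hSle.2 (x := ⟨(u : H), huS⟩) (y := ⟨(u : H), huSc⟩) rfl]
      exact hval
    have hnn := hSnn ⟨(u : H), huSc⟩
    rw [hval2] at hnn
    have : (⟪(u : H), -(u : H)⟫_ℂ).re = -(‖(u : H)‖ ^ 2) := by
      rw [inner_neg_right]
      have : (⟪(u : H), (u : H)⟫_ℂ).re = ‖(u : H)‖ ^ 2 := by
        rw [← RCLike.re_to_complex]
        exact inner_self_eq_norm_sq _
      rw [Complex.neg_re, this]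
    rw [this] at hnn
    have : ‖(u : H)‖ = 0 := by nlinarith [sq_nonneg ‖(u : H)‖]
    simpa using this
  -- the ranges of `A ± i` are everything
  have hRtop : ∀ c : ℂ, c = Complex.I ∨ c = -Complex.I → myRange A c = ⊤ := by
    intro c hc
    have hclosed := myRange_isClosed A hA_closed hA_symm c hc
    haveI : CompleteSpace (myRange A c) := hclosed.completeSpace_coe
    rw [← Submodule.orthogonal_eq_bot_iff, Submodule.eq_bot_iff]
    intro u hu
    rw [Submodule.mem_orthogonal] at hu
    have hkey : ∀ x : A.domain,
        ⟪((-(starRingEnd ℂ) c) • u : H), (x : H)⟫_ℂ = ⟪u, (A x : H)⟫_ℂ := by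
      intro x
      have h0 : ⟪(A x : H) + c • (x : H), u⟫_ℂ = 0 :=
        hu _ ((myRange_mem A c _).mpr ⟨x, rfl⟩)
      rw [inner_add_left, inner_smul_left] at h0
      have h1 : ⟪(A x : H), u⟫_ℂ = -((starRingEnd ℂ) c * ⟪(x : H), u⟫_ℂ) := by
        linear_combination h0
      calc ⟪((-(starRingEnd ℂ) c) • u : H), (x : H)⟫_ℂ
          = -(c * ⟪u, (x : H)⟫_ℂ) := by rw [inner_smul_left, _root_.map_neg, Complex.conj_conj, neg_mul]
        _ = (starRingEnd ℂ) ⟪(A x : H), u⟫_ℂ := by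
            rw [h1]
            simp only [_root_.map_neg, map_mul, RingHomCompTriple.comp_apply, RingHom.id_apply,
              starRingEnd_self_apply, inner_conj_symm]
        _ = ⟪u, (A x : H)⟫_ℂ := inner_conj_symm _ _
    have hmem : u ∈ A.adjoint.domain :=
      mem_adjoint_domain_of_exists _ ⟨(-(starRingEnd ℂ) c) • u, hkey⟩
    have hval : (A.adjoint ⟨u, hmem⟩ : H) = (-(starRingEnd ℂ) c) • u :=
      adjoint_apply_eq hA_dense _ hkey
    have hc2 : (-(starRingEnd ℂ) c) ^ 2 = -1 := by
      rcases hc with h | h <;> simp [h, sq, Complex.I_mul_I]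
    exact heigen _ hc2 ⟨u, hmem⟩ hval
  -- the adjoint of `A` is contained in `A`
  have key : ∀ y : A.adjoint.domain,
      ∃ x : A.domain, ((x : H) = (y : H)) ∧ (A x : H) = A.adjoint y := by
    intro y
    have hz : (A.adjoint y : H) + Complex.I • (y : H) ∈ myRange A Complex.I := by
      rw [hRtop Complex.I (Or.inl rfl)]; trivial
    obtain ⟨x, hx⟩ := (myRange_mem A Complex.I _).mp hz
    have hxadj : (x : H) ∈ A.adjoint.domain := hA_le_adj.1 x.2
    have hxval : (A.adjoint ⟨(x : H), hxadj⟩ : H) = A x :=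
      (hA_le_adj.2 (x := x) (y := ⟨(x : H), hxadj⟩) rfl).symm
    have huval : (A.adjoint (y - ⟨(x : H), hxadj⟩) : H)
        = (-Complex.I) • (((y - ⟨(x : H), hxadj⟩ : A.adjoint.domain)) : H) := by
      rw [A.adjoint.map_sub, hxval]
      have hAx : (A x : H) = (A.adjoint y : H) + Complex.I • (y : H) - Complex.I • (x : H) := by
        rw [← hx]; abel
      have hco : (((y - ⟨(x : H), hxadj⟩ : A.adjoint.domain)) : H) = (y : H) - (x : H) := rfl
      rw [hco, hAx]
      module
    have hu0 := heigen (-Complex.I) (by simp [sq, Complex.I_mul_I]) _ huval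
    have hyx : (x : H) = (y : H) := by
      have hco : (((y - ⟨(x : H), hxadj⟩ : A.adjoint.domain)) : H) = (y : H) - (x : H) := rfl
      rw [hco, sub_eq_zero] at hu0
      exact hu0.symm
    refine ⟨x, hyx, ?_⟩
    have hsm : Complex.I • (x : H) = Complex.I • (y : H) := by rw [hyx]
    rw [hsm] at hx
    exact add_right_cancel hx
  have hle : A.adjoint ≤ A := by
    constructor
    · intro v hv
      obtain ⟨x, hxeq, _⟩ := key ⟨v, hv⟩
      have hxv : (x : H) = v := hxeq
      exact hxv ▸ x.2
    · intro a b hab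
      obtain ⟨x, hxeq, hxval⟩ := key a
      have hbx : b = x := Subtype.ext (by rw [← hab, hxeq])
      rw [← hxval, hbx]
  exact LinearPMap.eq_of_le_of_domain_eq hle (le_antisymm hle.1 hA_le_adj.1)
end

section
/- Suppose T : dom T ⊆ H → H is densely defined and closable with closure D, and suppose a ∈ B(H) preserves dom T and there exists a bounded operator S ∈ B(H) with T(a·v) = a·(T v) + S·v for all v ∈ dom T. Then a preserves dom D, and the commutator [D, a] defined on dom D extends to the bounded operator S on H. -/
/-- Let `T` be a densely defined closable operator with closure
`D = T.closure`, let `a` be a bounded operator preserving `dom T`, and suppose there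
is a bounded operator `S` with `T(a v) = a (T v) + S v` for all `v ∈ dom T` (a
Leibniz-type identity). Then `a` preserves `dom D`, and `D(a w) = a (D w) + S w` for
all `w ∈ dom D`; that is, the commutator `[D, a]` extends to the bounded operator
`S`. -/
theorem closure_preserved_and_bounded_commutator
    {H : Type*} [NormedAddCommGroup H] [InnerProductSpace ℂ H] [CompleteSpace H]
    (T : H →ₗ.[ℂ] H) (hdense : Dense (T.domain : Set H)) (hclos : T.IsClosable)
    (a S : H →L[ℂ] H)
    (hpres : ∀ v : T.domain, a v ∈ T.domain)
    (hleib : ∀ v : T.domain, T ⟨a v, hpres v⟩ = a (T v) + S v) :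
    ∃ hpres' : ∀ w : T.closure.domain, a w ∈ T.closure.domain,
      ∀ w : T.closure.domain, T.closure ⟨a w, hpres' w⟩ = a (T.closure w) + S w := by
  -- continuous linear map on H × H sending (x, y) ↦ (a x, a y + S x)
  let B : (H × H) →L[ℂ] (H × H) :=
    (a.comp (ContinuousLinearMap.fst ℂ H H)).prod
      ((a.comp (ContinuousLinearMap.snd ℂ H H)) + S.comp (ContinuousLinearMap.fst ℂ H H))
  have hB : ∀ p ∈ (T.graph : Set (H × H)), B p ∈ (T.graph : Set (H × H)) := by
    rintro ⟨x, y⟩ hp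
    rw [SetLike.mem_coe, LinearPMap.mem_graph_iff] at hp
    obtain ⟨v, hv1, hv2⟩ := hp
    rw [SetLike.mem_coe, LinearPMap.mem_graph_iff]
    refine ⟨⟨a v, hpres v⟩, ?_, ?_⟩
    · simp [B, hv1]
    · refine (hleib v).trans ?_
      rw [hv1, hv2]
      simp [B]
  -- B maps the closure of the graph into itself
  have key : ∀ p ∈ closure (T.graph : Set (H × H)), B p ∈ closure (T.graph : Set (H × H)) := by
    intro p hp
    have := (image_closure_subset_closure_image B.continuous) ⟨p, hp, rfl⟩
    exact closure_mono (Set.image_subset_iff.mpr hB) this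
  have hgraph : (T.closure.graph : Set (H × H)) = closure (T.graph : Set (H × H)) := by
    rw [← hclos.graph_closure_eq_closure_graph]
    rfl
  have hpres' : ∀ w : T.closure.domain, a w ∈ T.closure.domain := by
    intro w
    have hw : ((w : H), T.closure w) ∈ (T.closure.graph : Set (H × H)) :=
      T.closure.mem_graph w
    rw [hgraph] at hw
    have := key _ hw
    rw [← hgraph, SetLike.mem_coe, LinearPMap.mem_graph_iff] at this
    obtain ⟨v, hv1, hv2⟩ := this
    simp only [B, ContinuousLinearMap.prod_apply, ContinuousLinearMap.comp_apply,
      ContinuousLinearMap.coe_fst'] at hv1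
    rw [← hv1]
    exact v.2
  refine ⟨hpres', ?_⟩
  intro w
  have hw : ((w : H), T.closure w) ∈ (T.closure.graph : Set (H × H)) :=
    T.closure.mem_graph w
  rw [hgraph] at hw
  have hk := key _ hw
  rw [← hgraph, SetLike.mem_coe, LinearPMap.mem_graph_iff] at hk
  obtain ⟨v, hv1, hv2⟩ := hk
  have hveq : (v : H) = a w := by
    simpa [B] using hv1
  have : T.closure ⟨a w, hpres' w⟩ = T.closure v := by
    congr 1
    exact Subtype.ext hveq.symm
  rw [this, hv2]
  simp [B]
end
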